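/- For all θ ∈ ℝ and ω ∈ {−ω₀, ω₀}, the stationary density satisfies the integrated stationary equation (1/2)·∂θq(θ, ω) = q(θ, ω)·(⟨J∗q⟩_μ(θ) + ω) + κ(ω), where κ(ω) = (1 − exp(4πω))/(2·Z(ω, 2Kr)). -/

import Mathlib

noncomputable section

open MeasureTheory

/-- `G u ω x = x·cos u + 2ωu`. -/
def G (u ω x : ℝ) : ℝ := x * Real.cos u + 2 * ω * u

/-- The unnormalized stationary profile `S(θ, ω, x)`. -/
def S (θ ω x : ℝ) : ℝ :=
  Real.exp (G θ ω x) *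
    ((1 - Real.exp (4 * Real.pi * ω)) * (∫ u in (0:ℝ)..θ, Real.exp (-(G u ω x))) +
      Real.exp (4 * Real.pi * ω) * (∫ u in (0:ℝ)..(2 * Real.pi), Real.exp (-(G u ω x))))

/-- The normalization constant `Z(ω, x)`. -/
def Z (ω x : ℝ) : ℝ := ∫ θ in (0:ℝ)..(2 * Real.pi), S θ ω x

/-- `Ψ_μ` for the binary disorder law `μ = (1/2)(δ_{-ω₀} + δ_{ω₀})`. -/
def psiMu (ω₀ x : ℝ) : ℝ :=
  (1 / 2) * ((∫ θ in (0:ℝ)..(2 * Real.pi), Real.cos θ * S θ (-ω₀) x) / Z (-ω₀) x +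
    (∫ θ in (0:ℝ)..(2 * Real.pi), Real.cos θ * S θ ω₀ x) / Z ω₀ x)

/-- The stationary density `q(θ, ω) = S(θ, ω, 2Kr)/Z(ω, 2Kr)`. -/
def q (K r θ ω : ℝ) : ℝ := S θ ω (2 * K * r) / Z ω (2 * K * r)

/-- `κ(ω) = (1 − exp(4πω))/(2 Z(ω, 2Kr))`. -/
def kap (K r ω : ℝ) : ℝ := (1 - Real.exp (4 * Real.pi * ω)) / (2 * Z ω (2 * K * r))

/-- The averaged convolution `⟨J∗h⟩_μ(θ)` for binary disorder. -/
def Jconv (K ω₀ : ℝ) (h : ℝ → ℝ → ℝ) (θ : ℝ) : ℝ :=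
  -(K / 2) * ((∫ φ in (0:ℝ)..(2 * Real.pi), Real.sin φ * h (θ - φ) (-ω₀)) +
    (∫ φ in (0:ℝ)..(2 * Real.pi), Real.sin φ * h (θ - φ) ω₀))

/-- The linearized evolution operator `L` around the stationary density `q`. -/
def Lop (K ω₀ r : ℝ) (h : ℝ → ℝ → ℝ) (θ ω : ℝ) : ℝ :=
  (1 / 2) * deriv (deriv (fun u => h u ω)) θ -
    deriv (fun u => h u ω * (Jconv K ω₀ (q K r) u + ω) + q K r u ω * Jconv K ω₀ h u) θ

/- ### Auxiliary lemmas -/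

lemma contEG (ω x : ℝ) : Continuous fun u => Real.exp (-(G u ω x)) := by
  unfold G; continuity

lemma hasDerivAt_F (ω x θ : ℝ) :
    HasDerivAt (fun t => ∫ u in (0:ℝ)..t, Real.exp (-(G u ω x))) (Real.exp (-(G θ ω x))) θ :=
  intervalIntegral.integral_hasDerivAt_right ((contEG ω x).intervalIntegrable _ _)
    ((contEG ω x).stronglyMeasurableAtFilter _ _) (contEG ω x).continuousAt

lemma hasDerivAt_G (ω x θ : ℝ) :
    HasDerivAt (fun t => G t ω x) (2 * ω - x * Real.sin θ) θ := by
  have h1 := ((Real.hasDerivAt_cos θ).const_mul x).add (((hasDerivAt_id θ).const_mul (2*ω)))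
  simpa [G, mul_comm, mul_assoc, Pi.add_def] using h1.congr_deriv (by ring)

lemma hasDerivAt_S (ω x θ : ℝ) :
    HasDerivAt (fun t => S t ω x)
      ((2 * ω - x * Real.sin θ) * S θ ω x + (1 - Real.exp (4 * Real.pi * ω))) θ := by
  have h := (hasDerivAt_G ω x θ).exp.mul
    (((hasDerivAt_F ω x θ).const_mul (1 - Real.exp (4 * Real.pi * ω))).add_const
      (Real.exp (4 * Real.pi * ω) * ∫ u in (0:ℝ)..(2 * Real.pi), Real.exp (-(G u ω x))))
  have h2 : HasDerivAt (fun t => S t ω x)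
      (Real.exp (G θ ω x) * (2 * ω - x * Real.sin θ) *
        ((1 - Real.exp (4 * Real.pi * ω)) * (∫ u in (0:ℝ)..θ, Real.exp (-(G u ω x))) +
          Real.exp (4 * Real.pi * ω) * (∫ u in (0:ℝ)..(2 * Real.pi), Real.exp (-(G u ω x)))) +
        Real.exp (G θ ω x) * ((1 - Real.exp (4 * Real.pi * ω)) * Real.exp (-(G θ ω x)))) θ := by
    simpa [S, Pi.mul_def] using h
  convert h2 using 1
  rw [Real.exp_neg, S]
  field_simp

lemma continuous_S' (ω x : ℝ) : Continuous fun θ => S θ ω x :=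
  Differentiable.continuous fun θ => (hasDerivAt_S ω x θ).differentiableAt

lemma S_pos {θ : ℝ} (ω x : ℝ) (h1 : 0 < θ) (h2 : θ < 2 * Real.pi) : 0 < S θ ω x := by
  have hint : ∀ a b : ℝ, IntervalIntegrable (fun u => Real.exp (-(G u ω x))) volume a b :=
    fun a b => (contEG ω x).intervalIntegrable a b
  have key : (1 - Real.exp (4 * Real.pi * ω)) * (∫ u in (0:ℝ)..θ, Real.exp (-(G u ω x))) +
      Real.exp (4 * Real.pi * ω) * (∫ u in (0:ℝ)..(2 * Real.pi), Real.exp (-(G u ω x))) =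
      (∫ u in (0:ℝ)..θ, Real.exp (-(G u ω x))) +
      Real.exp (4 * Real.pi * ω) * (∫ u in θ..(2 * Real.pi), Real.exp (-(G u ω x))) := by
    rw [show (∫ u in θ..(2 * Real.pi), Real.exp (-(G u ω x))) =
        (∫ u in (0:ℝ)..(2 * Real.pi), Real.exp (-(G u ω x))) -
        (∫ u in (0:ℝ)..θ, Real.exp (-(G u ω x))) from
      (intervalIntegral.integral_interval_sub_left (hint 0 (2*Real.pi)) (hint 0 θ)).symm]
    ring
  have hF : 0 < ∫ u in (0:ℝ)..θ, Real.exp (-(G u ω x)) :=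
    intervalIntegral.intervalIntegral_pos_of_pos (hint 0 θ) (fun u => Real.exp_pos _) h1
  have hT : 0 < ∫ u in θ..(2 * Real.pi), Real.exp (-(G u ω x)) :=
    intervalIntegral.intervalIntegral_pos_of_pos (hint θ (2*Real.pi)) (fun u => Real.exp_pos _) h2
  rw [S, key]
  have := Real.exp_pos (G θ ω x)
  have := Real.exp_pos (4 * Real.pi * ω)
  positivity

lemma Z_pos (ω x : ℝ) : 0 < Z ω x :=
  intervalIntegral.intervalIntegral_pos_of_pos_on
    ((continuous_S' ω x).intervalIntegrable _ _)
    (fun θ hθ => S_pos ω x hθ.1 hθ.2) (by positivity)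

lemma G_shift (ω x u : ℝ) : G (u + 2 * Real.pi) ω x = G u ω x + 4 * Real.pi * ω := by
  unfold G; rw [Real.cos_add_two_pi]; ring

lemma F_shift (ω x θ : ℝ) :
    (∫ u in (0:ℝ)..(θ + 2 * Real.pi), Real.exp (-(G u ω x))) =
      (∫ u in (0:ℝ)..(2 * Real.pi), Real.exp (-(G u ω x))) +
        Real.exp (-(4 * Real.pi * ω)) * (∫ u in (0:ℝ)..θ, Real.exp (-(G u ω x))) := by
  have hint : ∀ a b : ℝ, IntervalIntegrable (fun u => Real.exp (-(G u ω x))) volume a b :=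
    fun a b => (contEG ω x).intervalIntegrable a b
  rw [← intervalIntegral.integral_add_adjacent_intervals (hint 0 (2*Real.pi))
    (hint (2*Real.pi) (θ + 2*Real.pi))]
  congr 1
  have : (∫ u in (2*Real.pi)..(θ + 2*Real.pi), Real.exp (-(G u ω x))) =
      ∫ u in (0:ℝ)..θ, Real.exp (-(G (u + 2*Real.pi) ω x)) := by
    rw [intervalIntegral.integral_comp_add_right (fun u => Real.exp (-(G u ω x))) (2*Real.pi)]
    norm_num
  rw [this]
  simp_rw [G_shift, neg_add, Real.exp_add]
  rw [intervalIntegral.integral_mul_const]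
  ring

lemma S_periodic (ω x : ℝ) : Function.Periodic (fun θ => S θ ω x) (2 * Real.pi) := by
  intro θ
  simp only [S, F_shift, G_shift]
  rw [Real.exp_add, Real.exp_neg]
  have hE := Real.exp_ne_zero (4 * Real.pi * ω)
  field_simp
  ring

lemma G_neg (ω x u : ℝ) : G (-u) ω x = G u (-ω) x := by
  unfold G; rw [Real.cos_neg]; ring

lemma F_neg (ω x θ : ℝ) :
    (∫ u in (0:ℝ)..(-θ), Real.exp (-(G u ω x))) =
      -(∫ u in (0:ℝ)..θ, Real.exp (-(G u (-ω) x))) := by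
  have : (∫ u in (0:ℝ)..θ, Real.exp (-(G u (-ω) x))) =
      ∫ u in (0:ℝ)..θ, Real.exp (-(G (-u) ω x)) := by simp_rw [G_neg]
  rw [this, intervalIntegral.integral_comp_neg (fun u => Real.exp (-(G u ω x)))]
  rw [intervalIntegral.integral_symm]
  norm_num

lemma G_refl (ω x u : ℝ) : G (2 * Real.pi - u) ω x = G u (-ω) x + 4 * Real.pi * ω := by
  unfold G; rw [Real.cos_two_pi_sub]; ring

lemma I_reflect (ω x : ℝ) :
    (∫ u in (0:ℝ)..(2 * Real.pi), Real.exp (-(G u ω x))) =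
      Real.exp (-(4 * Real.pi * ω)) * ∫ u in (0:ℝ)..(2 * Real.pi), Real.exp (-(G u (-ω) x)) := by
  have h : (∫ u in (0:ℝ)..(2 * Real.pi), Real.exp (-(G u ω x))) =
      ∫ u in (0:ℝ)..(2 * Real.pi), Real.exp (-(G (2 * Real.pi - u) ω x)) := by
    rw [intervalIntegral.integral_comp_sub_left (fun u => Real.exp (-(G u ω x))) (2*Real.pi)]
    norm_num
  rw [h]
  simp_rw [G_refl, neg_add, Real.exp_add]
  rw [intervalIntegral.integral_mul_const]
  ring

lemma S_reflect (ω x θ : ℝ) : S (-θ) ω x = Real.exp (4 * Real.pi * ω) * S θ (-ω) x := by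
  simp only [S, F_neg, I_reflect ω x, G_neg]
  rw [Real.exp_neg]
  have hE := Real.exp_ne_zero (4 * Real.pi * ω)
  have h4 : Real.exp (4 * Real.pi * -ω) = (Real.exp (4 * Real.pi * ω))⁻¹ := by
    rw [← Real.exp_neg]; ring_nf
  rw [h4]
  field_simp
  ring

lemma S_refl_shift (ω x θ : ℝ) :
    S (2 * Real.pi - θ) ω x = Real.exp (4 * Real.pi * ω) * S θ (-ω) x := by
  have hp := S_periodic ω x (-θ)
  simp only at hp
  rw [show 2 * Real.pi - θ = -θ + 2 * Real.pi by ring, hp, S_reflect]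

lemma Z_reflect (ω x : ℝ) : Z ω x = Real.exp (4 * Real.pi * ω) * Z (-ω) x := by
  have h1 : Z ω x = ∫ θ in (0:ℝ)..(2 * Real.pi), S (2 * Real.pi - θ) ω x := by
    rw [intervalIntegral.integral_comp_sub_left (fun θ => S θ ω x) (2 * Real.pi)]
    norm_num [Z]
  rw [h1]
  simp_rw [S_refl_shift]
  rw [intervalIntegral.integral_const_mul, Z]

lemma sin_moment_reflect (ω x : ℝ) :
    (∫ θ in (0:ℝ)..(2 * Real.pi), Real.sin θ * S θ ω x) =
      -(Real.exp (4 * Real.pi * ω) *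
        ∫ θ in (0:ℝ)..(2 * Real.pi), Real.sin θ * S θ (-ω) x) := by
  have h1 : (∫ θ in (0:ℝ)..(2 * Real.pi), Real.sin θ * S θ ω x) =
      ∫ θ in (0:ℝ)..(2 * Real.pi), Real.sin (2 * Real.pi - θ) * S (2 * Real.pi - θ) ω x := by
    rw [intervalIntegral.integral_comp_sub_left (fun θ => Real.sin θ * S θ ω x) (2 * Real.pi)]
    norm_num
  have h2 : ∀ θ : ℝ, Real.sin (2 * Real.pi - θ) * S (2 * Real.pi - θ) ω x =
      -(Real.exp (4 * Real.pi * ω)) * (Real.sin θ * S θ (-ω) x) := by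
    intro θ
    rw [S_refl_shift, show 2 * Real.pi - θ = -θ + 2 * Real.pi by ring, Real.sin_add_two_pi,
      Real.sin_neg]
    ring
  rw [h1]
  simp_rw [h2]
  rw [intervalIntegral.integral_const_mul]
  ring

lemma conv_S (ω x θ : ℝ) :
    (∫ φ in (0:ℝ)..(2 * Real.pi), Real.sin φ * S (θ - φ) ω x) =
      Real.sin θ * (∫ u in (0:ℝ)..(2 * Real.pi), Real.cos u * S u ω x) -
        Real.cos θ * (∫ u in (0:ℝ)..(2 * Real.pi), Real.sin u * S u ω x) := by
  have h1 : (∫ φ in (0:ℝ)..(2 * Real.pi), Real.sin φ * S (θ - φ) ω x) =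
      ∫ u in (θ - 2 * Real.pi)..(θ - 0), Real.sin (θ - u) * S u ω x := by
    rw [← intervalIntegral.integral_comp_sub_left (fun u => Real.sin (θ - u) * S u ω x) θ]
    apply intervalIntegral.integral_congr
    intro φ _
    simp
  have hper : Function.Periodic (fun u => Real.sin (θ - u) * S u ω x) (2 * Real.pi) := by
    intro u
    have hp := S_periodic ω x u
    simp only at hp ⊢
    rw [hp, show θ - (u + 2 * Real.pi) = (θ - u) - 2 * Real.pi by ring,
      Real.sin_sub_two_pi]
  have h2 := hper.intervalIntegral_add_eq (θ - 2 * Real.pi) 0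
  rw [h1, show θ - 0 = (θ - 2 * Real.pi) + 2 * Real.pi by ring, h2]
  simp only [zero_add]
  have h3 : ∀ u : ℝ, Real.sin (θ - u) * S u ω x =
      Real.sin θ * (Real.cos u * S u ω x) - Real.cos θ * (Real.sin u * S u ω x) := by
    intro u; rw [Real.sin_sub]; ring
  simp_rw [h3]
  rw [intervalIntegral.integral_sub, intervalIntegral.integral_const_mul,
    intervalIntegral.integral_const_mul]
  · exact ((continuous_const.mul (Real.continuous_cos.mul (continuous_S' ω x))).intervalIntegrable _ _)
  · exact ((continuous_const.mul (Real.continuous_sin.mul (continuous_S' ω x))).intervalIntegrable _ _)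

lemma Jconv_q (K ω₀ r θ : ℝ) (hfix : r = psiMu ω₀ (2 * K * r)) :
    Jconv K ω₀ (q K r) θ = -(K * r) * Real.sin θ := by
  set x := 2 * K * r with hx
  have hconv : ∀ ω : ℝ, (∫ φ in (0:ℝ)..(2 * Real.pi), Real.sin φ * q K r (θ - φ) ω) =
      (Real.sin θ * (∫ u in (0:ℝ)..(2 * Real.pi), Real.cos u * S u ω x) -
        Real.cos θ * (∫ u in (0:ℝ)..(2 * Real.pi), Real.sin u * S u ω x)) / Z ω x := by
    intro ω
    have : ∀ φ : ℝ, Real.sin φ * q K r (θ - φ) ω =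
        (Real.sin φ * S (θ - φ) ω x) / Z ω x := by
      intro φ; rw [q]; ring
    simp_rw [this]
    rw [intervalIntegral.integral_div, conv_S]
  have hZp := Z_pos ω₀ x
  have hZm := Z_pos (-ω₀) x
  have hE := Real.exp_pos (4 * Real.pi * ω₀)
  have hZr := Z_reflect ω₀ x
  have hD := sin_moment_reflect ω₀ x
  have hC : (∫ u in (0:ℝ)..(2 * Real.pi), Real.cos u * S u (-ω₀) x) / Z (-ω₀) x +
      (∫ u in (0:ℝ)..(2 * Real.pi), Real.cos u * S u ω₀ x) / Z ω₀ x = 2 * r := by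
    rw [hfix, psiMu]; ring
  have hDsum : (∫ u in (0:ℝ)..(2 * Real.pi), Real.sin u * S u (-ω₀) x) / Z (-ω₀) x +
      (∫ u in (0:ℝ)..(2 * Real.pi), Real.sin u * S u ω₀ x) / Z ω₀ x = 0 := by
    rw [hD, hZr]
    field_simp
    ring
  rw [Jconv, hconv, hconv]
  linear_combination (-(K / 2) * Real.sin θ) * hC + (K / 2 * Real.cos θ) * hDsum


/-- The integrated stationary equation. -/
theorem stmt4 (K ω₀ r : ℝ) (hK : 0 < K) (hω₀ : 0 < ω₀) (hr : 0 < r)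
    (hfix : r = psiMu ω₀ (2 * K * r)) :
    ∀ θ : ℝ, ∀ ω ∈ ({-ω₀, ω₀} : Set ℝ),
      (1 / 2) * deriv (fun u => q K r u ω) θ =
        q K r θ ω * (Jconv K ω₀ (q K r) θ + ω) + kap K r ω := by
  intro θ ω _
  have hZ := (Z_pos ω (2 * K * r)).ne'
  have hq : HasDerivAt (fun u => q K r u ω)
      (((2 * ω - (2 * K * r) * Real.sin θ) * S θ ω (2 * K * r) +
        (1 - Real.exp (4 * Real.pi * ω))) / Z ω (2 * K * r)) θ := by
    simpa [q] using (hasDerivAt_S ω (2 * K * r) θ).div_const (Z ω (2 * K * r))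
  rw [hq.deriv, Jconv_q K ω₀ r θ hfix, q, kap]
  field_simp
  ring
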